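/- Let Q be a finite (left) quasifield with q elements. If P is a set of points in Q² and L is a set of lines in Q², then the number of incidences satisfies |{(p,l) ∈ P×L : p ∈ l}| ≤ |P|·|L|/q + q^{1/2}·√(|P|·|L|). -/

import Mathlib

/-- A finite (left) quasifield. -/
class Quasifield (Q : Type*) extends AddCommGroup Q, Mul Q, One Q where
  one_ne_zero : (1 : Q) ≠ 0
  one_mul : ∀ a : Q, 1 * a = a
  mul_one : ∀ a : Q, a * 1 = a
  zero_mul : ∀ a : Q, 0 * a = 0
  mul_zero : ∀ a : Q, a * 0 = 0
  mul_ne_zero : ∀ a b : Q, a ≠ 0 → b ≠ 0 → a * b ≠ 0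
  existsUnique_mul_left : ∀ a b : Q, a ≠ 0 → b ≠ 0 → ∃! x : Q, a * x = b
  existsUnique_mul_right : ∀ a b : Q, a ≠ 0 → b ≠ 0 → ∃! y : Q, y * a = b
  left_distrib : ∀ a b c : Q, a * (b + c) = a * b + a * c
  existsUnique_affine : ∀ a b c : Q, a ≠ b → ∃! x : Q, a * x = b * x + c

/-- The kernel of a quasifield. -/
def Quasifield.kernel (Q : Type*) [Quasifield Q] : Set Q :=
  {k | (∀ x y : Q, (x + y) * k = x * k + y * k) ∧ ∀ x y : Q, (x * y) * k = x * (y * k)}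

/-- A line in `Q²` : either `{(x,y) : y = b·x + a}` or a vertical line `{(a,y)}`. -/
def IsLine {Q : Type*} [Quasifield Q] (l : Set (Q × Q)) : Prop :=
  (∃ a b : Q, l = {p : Q × Q | p.2 = b * p.1 + a}) ∨ ∃ a : Q, l = {p : Q × Q | p.1 = a}

open Finset
open scoped Classical

section Aux

variable {Q : Type*} [Quasifield Q]

private lemma vert_of_two {l : Set (Q × Q)} (hl : IsLine l) {p p' : Q × Q}
    (hpp : p ≠ p') (h1 : p ∈ l) (h2 : p' ∈ l) (hx : p.1 = p'.1) :
    l = {x : Q × Q | x.1 = p.1} := by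
  rcases hl with ⟨a, b, rfl⟩ | ⟨a, rfl⟩
  · exfalso
    apply hpp
    have h1' : p.2 = b * p.1 + a := h1
    have h2' : p'.2 = b * p'.1 + a := h2
    exact Prod.ext hx (by rw [h1', h2', hx])
  · have ha : p.1 = a := h1
    rw [ha]

private lemma line_unique {l l' : Set (Q × Q)} (hl : IsLine l) (hl' : IsLine l')
    {p p' : Q × Q} (hpp : p ≠ p') (h1 : p ∈ l) (h2 : p' ∈ l) (h3 : p ∈ l') (h4 : p' ∈ l') :
    l = l' := by
  by_cases hx : p.1 = p'.1
  · rw [vert_of_two hl hpp h1 h2 hx, vert_of_two hl' hpp h3 h4 hx]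
  · have key : ∀ {s : Set (Q × Q)}, IsLine s → p ∈ s → p' ∈ s →
        ∃ a b : Q, s = {x : Q × Q | x.2 = b * x.1 + a} := by
      rintro s (⟨a, b, rfl⟩ | ⟨a, rfl⟩) hp hp'
      · exact ⟨a, b, rfl⟩
      · have hpa : p.1 = a := hp
        have hpa' : p'.1 = a := hp'
        exact absurd (hpa.trans hpa'.symm) hx
    obtain ⟨a, b, rfl⟩ := key hl h1 h2
    obtain ⟨a', b', rfl⟩ := key hl' h3 h4
    have h1' : p.2 = b * p.1 + a := h1
    have h2' : p'.2 = b * p'.1 + a := h2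
    have h3' : p.2 = b' * p.1 + a' := h3
    have h4' : p'.2 = b' * p'.1 + a' := h4
    have e1 : b * p.1 + a = b' * p.1 + a' := by rw [← h1', ← h3']
    have e2 : b * p'.1 + a = b' * p'.1 + a' := by rw [← h2', ← h4']
    by_cases hb : b = b'
    · subst hb
      have ha : a = a' := add_left_cancel e1
      rw [ha]
    · exfalso
      obtain ⟨x, -, hu⟩ := Quasifield.existsUnique_affine b b' (a' - a) hb
      have s1 : b * p.1 = b' * p.1 + (a' - a) := by
        rw [← add_sub_assoc, ← e1, add_sub_cancel_right]
      have s2 : b * p'.1 = b' * p'.1 + (a' - a) := by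
        rw [← add_sub_assoc, ← e2, add_sub_cancel_right]
      exact hx ((hu _ s1).trans (hu _ s2).symm)

variable [Fintype Q]

private lemma line_card {l : Set (Q × Q)} (hl : IsLine l) :
    (univ.filter (fun p : Q × Q => p ∈ l)).card = Fintype.card Q := by
  rcases hl with ⟨a, b, rfl⟩ | ⟨a, rfl⟩
  · have himg : univ.filter (fun p : Q × Q => p ∈ {x : Q × Q | x.2 = b * x.1 + a})
        = univ.image (fun x : Q => (x, b * x + a)) := by
      ext p
      simp only [mem_filter, mem_univ, true_and, mem_image, Set.mem_setOf_eq]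
      constructor
      · intro h; exact ⟨p.1, by rw [← h]⟩
      · rintro ⟨x, rfl⟩; rfl
    rw [himg, Finset.card_image_of_injective _ (fun x y h => congrArg Prod.fst h), card_univ]
  · have himg : univ.filter (fun p : Q × Q => p ∈ {x : Q × Q | x.1 = a})
        = univ.image (fun y : Q => ((a : Q), y)) := by
      ext p
      simp only [mem_filter, mem_univ, true_and, mem_image, Set.mem_setOf_eq]
      constructor
      · intro h; exact ⟨p.2, by rw [← h]⟩
      · rintro ⟨y, rfl⟩; rfl
    rw [himg, Finset.card_image_of_injective _ (fun x y h => congrArg Prod.snd h), card_univ]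

private lemma inter_card_le {l l' : Set (Q × Q)} (hl : IsLine l) (hl' : IsLine l')
    (hne : l ≠ l') :
    (univ.filter (fun p : Q × Q => p ∈ l ∧ p ∈ l')).card ≤ 1 := by
  rw [Finset.card_le_one]
  intro p hp p' hp'
  simp only [mem_filter, mem_univ, true_and] at hp hp'
  by_contra hppne
  exact hne (line_unique hl hl' hppne hp.1 hp'.1 hp.2 hp'.2)

end Aux

/-- Szemerédi–Trotter type theorem in a finite quasifield (Theorem 1.7):
the number of incidences between a set of points `P` and a set of lines `L` in `Q²`
is at most `|P||L|/q + √q·√(|P||L|)`. -/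
theorem stmt_2 {Q : Type*} [Quasifield Q] [Fintype Q]
    (P : Set (Q × Q)) (L : Set (Set (Q × Q))) (hL : ∀ l ∈ L, IsLine l) :
    (Set.ncard {pl : (Q × Q) × Set (Q × Q) | pl.1 ∈ P ∧ pl.2 ∈ L ∧ pl.1 ∈ pl.2} : ℝ) ≤
      (P.ncard : ℝ) * L.ncard / (Fintype.card Q) +
        Real.sqrt (Fintype.card Q) * Real.sqrt ((P.ncard : ℝ) * L.ncard) := by
  have hq0 : 0 < Fintype.card Q := Fintype.card_pos
  set L' : Finset (Set (Q × Q)) := L.toFinite.toFinset with hL'def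
  set P' : Finset (Q × Q) := P.toFinite.toFinset with hP'def
  have hmemL : ∀ l, l ∈ L' ↔ l ∈ L := fun l => Set.Finite.mem_toFinset _
  have hmemP : ∀ p, p ∈ P' ↔ p ∈ P := fun p => Set.Finite.mem_toFinset _
  set n : ℝ := (Fintype.card Q : ℝ) with hn
  have hn0 : (0 : ℝ) < n := by positivity
  set m : ℝ := (L'.card : ℝ) with hm
  have hm0 : (0 : ℝ) ≤ m := by positivity
  set k : ℝ := (P'.card : ℝ) with hk
  have hk0 : (0 : ℝ) ≤ k := by positivity
  set d : Q × Q → ℝ := fun p => ∑ l ∈ L', if p ∈ l then (1 : ℝ) else 0 with hd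
  -- Step 1 : the incidence count equals ∑_{p ∈ P'} d p
  have hI : (Set.ncard {pl : (Q × Q) × Set (Q × Q) | pl.1 ∈ P ∧ pl.2 ∈ L ∧ pl.1 ∈ pl.2} : ℝ)
      = ∑ p ∈ P', d p := by
    have hfin : ({pl : (Q × Q) × Set (Q × Q) | pl.1 ∈ P ∧ pl.2 ∈ L ∧ pl.1 ∈ pl.2}).Finite :=
      Set.toFinite _
    rw [Set.ncard_eq_toFinset_card _ hfin]
    have hset : hfin.toFinset = (P' ×ˢ L').filter (fun pl => pl.1 ∈ pl.2) := by
      ext pl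
      simp only [Set.Finite.mem_toFinset, Set.mem_setOf_eq, mem_filter, mem_product,
        hmemP, hmemL]
      tauto
    rw [hset, Finset.card_filter]
    rw [Finset.sum_product]
    push_cast
    apply Finset.sum_congr rfl
    intro p _
    rw [hd]
  -- Step 2 : total degree sum
  have hsum1 : ∑ p : Q × Q, d p = n * m := by
    rw [hd]
    rw [Finset.sum_comm]
    have : ∀ l ∈ L', (∑ p : Q × Q, if p ∈ l then (1 : ℝ) else 0) = n := by
      intro l hl
      rw [Finset.sum_boole, line_card (hL l ((hmemL l).1 hl))]
    rw [Finset.sum_congr rfl this, Finset.sum_const, nsmul_eq_mul]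
    ring
  -- Step 3 : second moment
  have hsum2 : ∑ p : Q × Q, (d p) ^ 2 ≤ m * (n + m) := by
    have hexp : ∀ p : Q × Q, (d p) ^ 2
        = ∑ l ∈ L', ∑ l' ∈ L', (if p ∈ l ∧ p ∈ l' then (1 : ℝ) else 0) := by
      intro p
      rw [sq, hd, Finset.sum_mul_sum]
      apply Finset.sum_congr rfl; intro l _
      apply Finset.sum_congr rfl; intro l' _
      by_cases h1 : p ∈ l <;> by_cases h2 : p ∈ l' <;> simp [h1, h2]
    calc ∑ p : Q × Q, (d p) ^ 2
        = ∑ l ∈ L', ∑ l' ∈ L', ∑ p : Q × Q, (if p ∈ l ∧ p ∈ l' then (1 : ℝ) else 0) := by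
          rw [Finset.sum_congr rfl (fun p _ => hexp p), Finset.sum_comm]
          apply Finset.sum_congr rfl; intro l _
          rw [Finset.sum_comm]
      _ ≤ ∑ l ∈ L', ∑ l' ∈ L', ((if l = l' then n else 0) + 1) := by
          apply Finset.sum_le_sum; intro l hl
          apply Finset.sum_le_sum; intro l' hl'
          rw [Finset.sum_boole]
          by_cases he : l = l'
          · subst he
            rw [if_pos rfl]
            have heq : (univ.filter (fun p : Q × Q => p ∈ l ∧ p ∈ l)) =
                (univ.filter (fun p : Q × Q => p ∈ l)) := by
              apply Finset.filter_congr; intro p _; simp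
            rw [heq, line_card (hL l ((hmemL l).1 hl)), ← hn]
            linarith
          · simp only [if_neg he, zero_add]
            have := inter_card_le (hL l ((hmemL l).1 hl)) (hL l' ((hmemL l').1 hl')) he
            exact_mod_cast this
      _ ≤ m * (n + m) := by
          have : ∀ l ∈ L', ∑ l' ∈ L', ((if l = l' then n else 0) + 1) ≤ n + m := by
            intro l hl
            rw [Finset.sum_add_distrib, Finset.sum_const, Finset.sum_ite_eq, if_pos hl,
              nsmul_eq_mul, mul_one]
          calc ∑ l ∈ L', ∑ l' ∈ L', ((if l = l' then n else 0) + 1)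
              ≤ ∑ _l ∈ L', (n + m) := Finset.sum_le_sum this
            _ = m * (n + m) := by rw [Finset.sum_const, nsmul_eq_mul]
  -- Step 4 : variance bound
  have hV : ∑ p : Q × Q, (d p - m / n) ^ 2 ≤ n * m := by
    have hcard : ((Fintype.card (Q × Q) : ℝ)) = n ^ 2 := by
      rw [Fintype.card_prod]; push_cast; rw [hn]; ring
    have hexpand : ∑ p : Q × Q, (d p - m / n) ^ 2
        = (∑ p : Q × Q, (d p) ^ 2) - 2 * (m / n) * (∑ p : Q × Q, d p)
          + (Fintype.card (Q × Q) : ℝ) * (m / n) ^ 2 := by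
      rw [Finset.mul_sum, ← Finset.sum_sub_distrib]
      rw [show ((Fintype.card (Q × Q) : ℝ)) * (m / n) ^ 2
          = ∑ _p : Q × Q, (m / n) ^ 2 by rw [Finset.sum_const, card_univ, nsmul_eq_mul]]
      rw [← Finset.sum_add_distrib]
      apply Finset.sum_congr rfl; intro p _; ring
    rw [hexpand, hsum1, hcard]
    have h1 : 2 * (m / n) * (n * m) = 2 * m ^ 2 := by field_simp
    have h2 : n ^ 2 * (m / n) ^ 2 = m ^ 2 := by field_simp
    rw [h1, h2]
    nlinarith [hsum2]
  -- Step 5 : Cauchy–Schwarz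
  have hCS := Finset.sum_mul_sq_le_sq_mul_sq P' (fun _ => (1 : ℝ)) (fun p => d p - m / n)
  simp only [one_pow, one_mul, Finset.sum_const, nsmul_eq_mul, mul_one] at hCS
  have hsub : ∑ p ∈ P', (d p - m / n) ^ 2 ≤ ∑ p : Q × Q, (d p - m / n) ^ 2 :=
    Finset.sum_le_sum_of_subset_of_nonneg (Finset.subset_univ _)
      (fun p _ _ => sq_nonneg _)
  have hX2 : (∑ p ∈ P', (d p - m / n)) ^ 2 ≤ k * (n * m) := by
    calc (∑ p ∈ P', (d p - m / n)) ^ 2 ≤ k * ∑ p ∈ P', (d p - m / n) ^ 2 := hCS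
      _ ≤ k * (n * m) := by
          apply mul_le_mul_of_nonneg_left _ hk0
          exact le_trans hsub hV
  have hXle : ∑ p ∈ P', (d p - m / n) ≤ Real.sqrt n * Real.sqrt (k * m) := by
    have h1 : ∑ p ∈ P', (d p - m / n) ≤ Real.sqrt ((∑ p ∈ P', (d p - m / n)) ^ 2) := by
      rw [Real.sqrt_sq_eq_abs]; exact le_abs_self _
    have h2 : Real.sqrt ((∑ p ∈ P', (d p - m / n)) ^ 2) ≤ Real.sqrt (k * (n * m)) :=
      Real.sqrt_le_sqrt hX2
    have h3 : Real.sqrt (k * (n * m)) = Real.sqrt n * Real.sqrt (k * m) := by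
      rw [show k * (n * m) = n * (k * m) by ring, Real.sqrt_mul hn0.le]
    linarith
  -- Conclusion
  have hsumsub : ∑ p ∈ P', (d p - m / n) = (∑ p ∈ P', d p) - k * (m / n) := by
    rw [Finset.sum_sub_distrib, Finset.sum_const, nsmul_eq_mul]
  have hfinal : (∑ p ∈ P', d p) ≤ k * m / n + Real.sqrt n * Real.sqrt (k * m) := by
    have := hXle
    rw [hsumsub] at this
    have hkm : k * (m / n) = k * m / n := by ring
    linarith [hkm ▸ this]
  rw [hI]
  have hPcard : (P.ncard : ℝ) = k := by
    rw [hk, hP'def, Set.ncard_eq_toFinset_card _ P.toFinite]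
  have hLcard : (L.ncard : ℝ) = m := by
    rw [hm, hL'def, Set.ncard_eq_toFinset_card _ L.toFinite]
  rw [hPcard, hLcard]
  exact hfinal
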